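/- Fix x ∈ C_n(ℝ³). Suppose u_{ab} = (u_{ab}, v_{ab}) and w_{ab} = (w_{ab}, z_{ab}) are two systems of Hopf lifts, i.e. h(u_{ab}, v_{ab}) = h(w_{ab}, z_{ab}) = x_b − x_a for all a ≠ b, and assume the denominator products ∏_{a<b} det(p_{ab}, p_{ba}) are nonzero for both systems. Then the value of the normalized determinant D(x) computed with the lifts u_{ab} equals the value computed with the lifts w_{ab}; that is, D(x) is independent of the choice of Hopf lifts. -/

import Mathlib

open Polynomial Finset

/-- The Hopf map `h : ℂ² → ℝ³`, where `ℝ³` is identified with `ℂ × ℝ`: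
`h(u,v) = (2·u·conj v, |u|² − |v|²)`. -/
noncomputable def hopf (p : ℂ × ℂ) : ℂ × ℝ :=
  (2 * p.1 * (starRingEnd ℂ) p.2, ‖p.1‖ ^ 2 - ‖p.2‖ ^ 2)

/-- `u, v` form a system of Hopf lifts for the configuration `x`:
`h(u_{ab}, v_{ab}) = x_b − x_a` for all `a ≠ b`. -/
def HopfLifts (n : ℕ) (x : Fin n → ℂ × ℝ) (u v : Fin n → Fin n → ℂ) : Prop :=
  ∀ a b : Fin n, a ≠ b → hopf (u a b, v a b) = x b - x a

/-- The Atiyah–Sutcliffe polynomial `p_a(t) = ∏_{b ≠ a} (u_{ab}·t − v_{ab})`. -/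
noncomputable def ASpoly (n : ℕ) (u v : Fin n → Fin n → ℂ) (a : Fin n) : Polynomial ℂ :=
  ∏ b ∈ Finset.univ.erase a, (Polynomial.C (u a b) * Polynomial.X - Polynomial.C (v a b))

/-- The `n × n` matrix whose `a`-th column consists of the coefficients of `p_a`,
ordered by increasing powers of `t`. -/
noncomputable def ASmatrix (n : ℕ) (u v : Fin n → Fin n → ℂ) : Matrix (Fin n) (Fin n) ℂ :=
  Matrix.of fun i a => (ASpoly n u v a).coeff i

/-- `det(p_{ab}, p_{ba})`: the determinant of the 2×2 matrix whose columns are the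
coefficient vectors `(−v_{ab}, u_{ab})` and `(−v_{ba}, u_{ba})`. -/
noncomputable def ASpairDet (n : ℕ) (u v : Fin n → Fin n → ℂ) (a b : Fin n) : ℂ :=
  Matrix.det !![-(v a b), -(v b a); u a b, u b a]

/-- The denominator `∏_{a<b} det(p_{ab}, p_{ba})` of the normalized determinant. -/
noncomputable def ASdenom (n : ℕ) (u v : Fin n → Fin n → ℂ) : ℂ :=
  ∏ p ∈ Finset.univ.filter (fun p : Fin n × Fin n => p.1 < p.2), ASpairDet n u v p.1 p.2

/-- The Atiyah–Sutcliffe normalized determinant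
`D = det(p_1, …, p_n) / ∏_{a<b} det(p_{ab}, p_{ba})`, computed from the lifts `u, v`. -/
noncomputable def ASdet (n : ℕ) (u v : Fin n → Fin n → ℂ) : ℂ :=
  (ASmatrix n u v).det / ASdenom n u v

lemma abs_pair_eq (a b c d : ℝ) (h2 : a^2 - b^2 = c^2 - d^2) (hab : a*b = c*d)
    (h0 : 0 ≤ a) (h0' : 0 ≤ b) (h0'' : 0 ≤ c) (h0''' : 0 ≤ d) :
    a = c ∧ b = d := by
  have e : (a^2+b^2)^2 = (c^2+d^2)^2 := by
    have h : (a^2+b^2)^2 = (a^2-b^2)^2 + 4*(a*b)^2 := by ring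
    rw [h, h2, hab]; ring
  have key : a^2+b^2 = c^2+d^2 := by
    nlinarith [sq_nonneg (a^2+b^2 - (c^2+d^2)), sq_nonneg (a^2+b^2 + (c^2+d^2))]
  constructor <;> nlinarith [sq_nonneg (a-c), sq_nonneg (a+c), sq_nonneg (b-d), sq_nonneg (b+d)]

lemma hopf_fiber (u v w z : ℂ) (h : hopf (u, v) = hopf (w, z)) (hne : ¬(u = 0 ∧ v = 0)) :
    ∃ l : ℂ, w = l * u ∧ z = l * v := by
  have h1 : 2 * u * (starRingEnd ℂ) v = 2 * w * (starRingEnd ℂ) z :=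
    congrArg Prod.fst h
  have h2 : ‖u‖ ^ 2 - ‖v‖ ^ 2 = ‖w‖ ^ 2 - ‖z‖ ^ 2 :=
    congrArg Prod.snd h
  have hab : ‖u‖ * ‖v‖ = ‖w‖ * ‖z‖ := by
    have := congrArg (‖·‖) h1
    simpa [norm_mul, Complex.norm_conj, mul_assoc] using this
  obtain ⟨hu, hv⟩ := abs_pair_eq _ _ _ _ h2 hab (norm_nonneg _) (norm_nonneg _)
    (norm_nonneg _) (norm_nonneg _)
  have h1' : u * (starRingEnd ℂ) v = w * (starRingEnd ℂ) z := by
    linear_combination h1 / 2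
  by_cases hu0 : u = 0
  · have hw0 : w = 0 := by
      have : ‖w‖ = 0 := by rw [← hu, hu0, norm_zero]
      exact norm_eq_zero.mp this
    have hv0 : v ≠ 0 := fun hv0 => hne ⟨hu0, hv0⟩
    exact ⟨z / v, by simp [hw0, hu0], by field_simp⟩
  · have hw0 : w ≠ 0 := by
      intro hw0
      apply hu0
      apply norm_eq_zero.mp
      rw [hu, hw0, norm_zero]
    refine ⟨w / u, by field_simp, ?_⟩
    have hc : (starRingEnd ℂ) u * v = (starRingEnd ℂ) w * z := by
      have := congrArg (starRingEnd ℂ) h1'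
      simpa [map_mul, mul_comm] using this
    have hnsq : (starRingEnd ℂ) u * u = (starRingEnd ℂ) w * w := by
      rw [mul_comm, mul_comm ((starRingEnd ℂ) w), Complex.mul_conj, Complex.mul_conj]
      norm_cast
      rw [Complex.normSq_eq_norm_sq, Complex.normSq_eq_norm_sq, hu]
    have hcw : (starRingEnd ℂ) w ≠ 0 := by simpa using hw0
    rw [div_mul_eq_mul_div, eq_div_iff hu0]
    refine mul_right_cancel₀ hcw ?_
    calc z * u * (starRingEnd ℂ) w = ((starRingEnd ℂ) w * z) * u := by ring
      _ = ((starRingEnd ℂ) u * v) * u := by rw [hc]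
      _ = ((starRingEnd ℂ) u * u) * v := by ring
      _ = ((starRingEnd ℂ) w * w) * v := by rw [hnsq]
      _ = w * v * (starRingEnd ℂ) w := by ring

/-- Reindexing a product over all ordered pairs with equal components mapping to 1. -/
lemma prod_pairs (n : ℕ) (l : Fin n → Fin n → ℂ) (hdiag : ∀ a, l a a = 1) :
    ∏ a, ∏ b ∈ Finset.univ.erase a, l a b =
      ∏ p ∈ Finset.univ.filter (fun p : Fin n × Fin n => p.1 < p.2), (l p.1 p.2 * l p.2 p.1) := by
  have lhs : ∏ a, ∏ b ∈ Finset.univ.erase a, l a b = ∏ p : Fin n × Fin n, l p.1 p.2 := by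
    rw [Fintype.prod_prod_type]
    exact Fintype.prod_congr _ _ fun a => (Finset.prod_erase _ (hdiag a))
  rw [lhs]
  rw [Finset.prod_mul_distrib]
  have swap_eq : ∏ p ∈ Finset.univ.filter (fun p : Fin n × Fin n => p.1 < p.2), l p.2 p.1 =
      ∏ p ∈ Finset.univ.filter (fun p : Fin n × Fin n => p.2 < p.1), l p.1 p.2 := by
    refine Finset.prod_nbij' Prod.swap Prod.swap ?_ ?_ ?_ ?_ ?_ <;>
      simp [Prod.swap]
  rw [swap_eq]
  rw [← Finset.prod_filter_mul_prod_filter_not Finset.univ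
    (fun p : Fin n × Fin n => p.1 < p.2) (fun p => l p.1 p.2)]
  congr 1
  rw [← Finset.prod_filter_mul_prod_filter_not
    (Finset.univ.filter (fun p : Fin n × Fin n => ¬ p.1 < p.2))
    (fun p : Fin n × Fin n => p.2 < p.1) (fun p => l p.1 p.2)]
  have hset : (Finset.univ.filter (fun p : Fin n × Fin n => ¬ p.1 < p.2)).filter
      (fun p : Fin n × Fin n => p.2 < p.1) =
      Finset.univ.filter (fun p : Fin n × Fin n => p.2 < p.1) := by
    rw [Finset.filter_filter]
    apply Finset.filter_congr
    intro p _
    simp only [and_iff_right_iff_imp]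
    exact fun h => asymm h
  have hone : ∏ p ∈ (Finset.univ.filter (fun p : Fin n × Fin n => ¬ p.1 < p.2)).filter
      (fun p : Fin n × Fin n => ¬ p.2 < p.1), l p.1 p.2 = 1 := by
    apply Finset.prod_eq_one
    intro p hp
    simp only [Finset.mem_filter] at hp
    have : p.1 = p.2 := le_antisymm (not_lt.mp hp.2) (not_lt.mp hp.1.2)
    rw [this, hdiag]
  rw [hset, hone, mul_one]

/-- The Atiyah–Sutcliffe normalized determinant is independent of the choice of
Hopf lifts: if `(u,v)` and `(w,z)` are two systems of Hopf lifts for the same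
configuration `x` of pairwise distinct points, whose denominator products are
nonzero, then they yield the same value of `D(x)`. -/
theorem ASdet_lift_independent (n : ℕ) (x : Fin n → ℂ × ℝ)
    (hx : Function.Injective x)
    (u v w z : Fin n → Fin n → ℂ)
    (huv : HopfLifts n x u v) (hwz : HopfLifts n x w z)
    (hd1 : ASdenom n u v ≠ 0) (hd2 : ASdenom n w z ≠ 0) :
    ASdet n u v = ASdet n w z := by
  have key : ∀ a b : Fin n, ∃ l : ℂ,
      (a ≠ b → (w a b = l * u a b ∧ z a b = l * v a b)) ∧ (a = b → l = 1) := by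
    intro a b
    by_cases hab : a = b
    · exact ⟨1, fun h => absurd hab h, fun _ => rfl⟩
    · have h1 := huv a b hab
      have h2 := hwz a b hab
      have hne : ¬(u a b = 0 ∧ v a b = 0) := by
        rintro ⟨h3, h4⟩
        have hne' : x b - x a ≠ 0 := sub_ne_zero.mpr fun e => hab (hx e).symm
        apply hne'
        rw [← h1, h3, h4]
        simp [hopf, Prod.ext_iff]
      obtain ⟨l, hl⟩ := hopf_fiber _ _ _ _ (h1.trans h2.symm) hne
      exact ⟨l, fun _ => hl, fun h => absurd h hab⟩
  choose l hl using key
  have hl1 : ∀ a b, a ≠ b → w a b = l a b * u a b ∧ z a b = l a b * v a b :=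
    fun a b h => (hl a b).1 h
  have hdiag : ∀ a, l a a = 1 := fun a => (hl a a).2 rfl
  -- polynomial scaling
  have hpoly : ∀ a, ASpoly n w z a =
      Polynomial.C (∏ b ∈ Finset.univ.erase a, l a b) * ASpoly n u v a := by
    intro a
    rw [ASpoly, ASpoly, map_prod, ← Finset.prod_mul_distrib]
    refine Finset.prod_congr rfl fun b hb => ?_
    have hne : a ≠ b := (Finset.mem_erase.mp hb).1.symm
    obtain ⟨e1, e2⟩ := hl1 a b hne
    rw [e1, e2, map_mul, map_mul]
    ring
  set c : ℂ := ∏ a, ∏ b ∈ Finset.univ.erase a, l a b with hc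
  have hmat : (ASmatrix n w z).det = c * (ASmatrix n u v).det := by
    have hM : ASmatrix n w z =
        (ASmatrix n u v) * Matrix.diagonal (fun a => ∏ b ∈ Finset.univ.erase a, l a b) := by
      ext i a
      rw [Matrix.mul_diagonal]
      simp only [ASmatrix, Matrix.of_apply, hpoly a, Polynomial.coeff_C_mul]
      ring
    rw [hM, Matrix.det_mul, Matrix.det_diagonal, hc]
    ring
  have hpair : ∀ a b : Fin n, a ≠ b →
      ASpairDet n w z a b = (l a b * l b a) * ASpairDet n u v a b := by
    intro a b hab
    obtain ⟨e1, e2⟩ := hl1 a b hab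
    obtain ⟨e3, e4⟩ := hl1 b a hab.symm
    simp only [ASpairDet, Matrix.det_fin_two_of, e1, e2, e3, e4]
    ring
  have hdenom : ASdenom n w z = c * ASdenom n u v := by
    rw [ASdenom, ASdenom]
    rw [hc, prod_pairs n l hdiag, ← Finset.prod_mul_distrib]
    refine Finset.prod_congr rfl fun p hp => ?_
    have hlt : p.1 < p.2 := (Finset.mem_filter.mp hp).2
    exact hpair p.1 p.2 (ne_of_lt hlt)
  have hc0 : c ≠ 0 := by
    intro h0
    apply hd2
    rw [hdenom, h0, zero_mul]
  rw [ASdet, ASdet, hmat, hdenom, mul_div_mul_left _ _ hc0]
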